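/- For every k ≥ 0, the order-k Euler characteristic of finite G-sets is multiplicative: χ^(k)(X₁ × X₂, G₁ × G₂) = χ^(k)(X₁, G₁) · χ^(k)(X₂, G₂). -/

import Mathlib

/-- The centralizer of `g` acts on the fixed-point set of `g`. -/
instance fixedByCentralizerAction {G : Type} [Group G] (X : Type) [MulAction G X] (g : G) :
    MulAction (Subgroup.centralizer ({g} : Set G)) (MulAction.fixedBy X g) where
  smul h x := ⟨(h : G) • (x : X), by
    have hc : g * (h : G) = (h : G) * g :=
      Subgroup.mem_centralizer_iff.mp h.2 g (Set.mem_singleton g)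
    have hx : g • (x : X) = (x : X) := x.2
    simp only [MulAction.mem_fixedBy]
    rw [← mul_smul, hc, mul_smul, hx]⟩
  one_smul x := Subtype.ext (one_smul G (x : X))
  mul_smul a b x := Subtype.ext (mul_smul (a : G) (b : G) (x : X))

/-- The order-`k` (orbifold) Euler characteristic of a `G`-set `X`. -/
noncomputable def chiOrb : ℕ → (X : Type) → (G : Type) → [Group G] → [MulAction G X] → ℕ
  | 0, X, G, _, _ => Nat.card (MulAction.orbitRel.Quotient G X)
  | k + 1, X, G, _, _ => ∑ᶠ c : ConjClasses G,
      chiOrb k (MulAction.fixedBy X (Quotient.out c))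
        (Subgroup.centralizer ({Quotient.out c} : Set G))

/-- Componentwise action of `G₁ × G₂` on `X₁ × X₂`. -/
instance prodProdMulAction {G₁ G₂ X₁ X₂ : Type} [Group G₁] [Group G₂]
    [MulAction G₁ X₁] [MulAction G₂ X₂] : MulAction (G₁ × G₂) (X₁ × X₂) where
  smul g x := (g.1 • x.1, g.2 • x.2)
  one_smul x := Prod.ext (one_smul G₁ x.1) (one_smul G₂ x.2)
  mul_smul a b x := Prod.ext (mul_smul a.1 b.1 x.1) (mul_smul a.2 b.2 x.2)

open MulAction Subgroup

lemma conjClasses_mk_out {G : Type} [Group G] (q : ConjClasses G) :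
    ConjClasses.mk (Quotient.out q) = q := by
  rw [← ConjClasses.quotient_mk_eq_mk]
  exact Quotient.out_eq q

/-- A group isomorphism induces an isomorphism of centralizers of a point. -/
def centMulEquiv {G G' : Type} [Group G] [Group G'] (e : G ≃* G') (a : G) :
    centralizer ({a} : Set G) ≃* centralizer ({e a} : Set G') where
  toFun u := ⟨e u.1, by
    rw [Subgroup.mem_centralizer_singleton_iff]
    have h1 : u.1 * a = a * u.1 := Subgroup.mem_centralizer_singleton_iff.mp u.2
    rw [← map_mul, ← map_mul, h1]⟩
  invFun v := ⟨e.symm v.1, by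
    rw [Subgroup.mem_centralizer_singleton_iff]
    have h2 : v.1 * e a = e a * v.1 := Subgroup.mem_centralizer_singleton_iff.mp v.2
    apply e.injective
    simp only [map_mul, MulEquiv.apply_symm_apply]
    exact h2⟩
  left_inv u := Subtype.ext (e.symm_apply_apply u.1)
  right_inv v := Subtype.ext (e.apply_symm_apply v.1)
  map_mul' u v := Subtype.ext (map_mul e u.1 v.1)

/-- An equivariant bijection induces a bijection of fixed sets. -/
def fixEquiv {X G X' G' : Type} [Group G] [Group G'] [MulAction G X] [MulAction G' X']
    (e : G ≃* G') (f : X ≃ X') (hf : ∀ (g : G) (x : X), f (g • x) = e g • f x) (a : G) :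
    fixedBy X a ≃ fixedBy X' (e a) where
  toFun x := ⟨f x.1, by
    have hx : a • x.1 = x.1 := x.2
    show e a • f x.1 = f x.1
    rw [← hf, hx]⟩
  invFun y := ⟨f.symm y.1, by
    have hy : e a • y.1 = y.1 := y.2
    show a • f.symm y.1 = f.symm y.1
    apply f.injective
    rw [hf]
    simp [hy]⟩
  left_inv x := Subtype.ext (f.symm_apply_apply x.1)
  right_inv y := Subtype.ext (f.apply_symm_apply y.1)

lemma fixEquiv_equivariant {X G X' G' : Type} [Group G] [Group G'] [MulAction G X]
    [MulAction G' X'] (e : G ≃* G') (f : X ≃ X') (hf : ∀ (g : G) (x : X), f (g • x) = e g • f x)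
    (a : G) (u : centralizer ({a} : Set G)) (x : fixedBy X a) :
    fixEquiv e f hf a (u • x) = centMulEquiv e a u • fixEquiv e f hf a x :=
  Subtype.ext (hf u.1 x.1)

/-- Conjugacy classes correspond under a group isomorphism. -/
def conjClassesCongr {G G' : Type} [Group G] [Group G'] (e : G ≃* G') :
    ConjClasses G ≃ ConjClasses G' :=
  Quotient.congr e.toEquiv (fun a b => by
    show IsConj a b ↔ IsConj (e a) (e b)
    constructor
    · exact fun h => e.toMonoidHom.map_isConj h
    · intro h
      have := e.symm.toMonoidHom.map_isConj h
      simpa using this)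

lemma conjClassesCongr_mk {G G' : Type} [Group G] [Group G'] (e : G ≃* G') (a : G) :
    conjClassesCongr e (ConjClasses.mk a) = ConjClasses.mk (e a) := rfl

/-- `chiOrb` is invariant under equivariant bijections. -/
lemma chiOrb_congr : ∀ (k : ℕ) (X G X' G' : Type) [Group G] [Group G'] [MulAction G X]
    [MulAction G' X'] (e : G ≃* G') (f : X ≃ X'),
    (∀ (g : G) (x : X), f (g • x) = e g • f x) →
    chiOrb k X G = chiOrb k X' G'
  | 0, X, G, X', G', _, _, _, _, e, f, hf => by
    show Nat.card (orbitRel.Quotient G X) = Nat.card (orbitRel.Quotient G' X')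
    refine Nat.card_congr (Quotient.congr f fun a b => ?_)
    show orbitRel G X a b ↔ orbitRel G' X' (f a) (f b)
    rw [orbitRel_apply, orbitRel_apply, mem_orbit_iff, mem_orbit_iff]
    constructor
    · rintro ⟨g, rfl⟩
      exact ⟨e g, (hf g b).symm⟩
    · rintro ⟨g', hg'⟩
      refine ⟨e.symm g', f.injective ?_⟩
      rw [hf, MulEquiv.apply_symm_apply, hg']
  | k + 1, X, G, X', G', _, _, _, _, e, f, hf => by
    show (∑ᶠ c : ConjClasses G, chiOrb k (fixedBy X (Quotient.out c))
        (centralizer ({Quotient.out c} : Set G)))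
      = ∑ᶠ c : ConjClasses G', chiOrb k (fixedBy X' (Quotient.out c))
        (centralizer ({Quotient.out c} : Set G'))
    refine finsum_eq_of_bijective (conjClassesCongr e) (conjClassesCongr e).bijective
      fun c => ?_
    -- `(conjClassesCongr e c).out` is conjugate to `e c.out`
    have h1 : ConjClasses.mk (Quotient.out (conjClassesCongr e c))
        = ConjClasses.mk (e (Quotient.out c)) := by
      rw [conjClasses_mk_out, ← conjClassesCongr_mk e, conjClasses_mk_out]
    have h3 : IsConj (e (Quotient.out c)) (Quotient.out (conjClassesCongr e c)) :=
      (ConjClasses.mk_eq_mk_iff_isConj.mp h1).symm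
    obtain ⟨h', hh'⟩ := isConj_iff.mp h3
    -- combined isomorphism
    have he''g : (e.trans (MulAut.conj h')) (Quotient.out c)
        = Quotient.out (conjClassesCongr e c) := by
      show h' * e (Quotient.out c) * h'⁻¹ = _
      exact hh'
    have hf'' : ∀ (g : G) (x : X), (f.trans (MulAction.toPerm h')) (g • x)
        = (e.trans (MulAut.conj h')) g • (f.trans (MulAction.toPerm h')) x := by
      intro g x
      show h' • f (g • x) = (h' * e g * h'⁻¹) • h' • f x
      rw [hf, smul_smul, smul_smul]
      congr 1
      group
    rw [← he''g]
    exact chiOrb_congr k _ _ _ _ (centMulEquiv (e.trans (MulAut.conj h')) (Quotient.out c))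
      (fixEquiv (e.trans (MulAut.conj h')) (f.trans (MulAction.toPerm h')) hf'' (Quotient.out c))
      (fixEquiv_equivariant (e.trans (MulAut.conj h')) (f.trans (MulAction.toPerm h')) hf''
        (Quotient.out c))

/-- Conjugate elements give the same `chiOrb` of fixed sets. -/
lemma chiOrb_fix_conj (k : ℕ) (X G : Type) [Group G] [MulAction G X] (g g' : G)
    (h : IsConj g g') :
    chiOrb k (fixedBy X g) (centralizer ({g} : Set G))
      = chiOrb k (fixedBy X g') (centralizer ({g'} : Set G)) := by
  obtain ⟨u, hu⟩ := isConj_iff.mp h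
  have he : (MulAut.conj u : G ≃* G) g = g' := hu
  have hf : ∀ (a : G) (x : X), (MulAction.toPerm u : Equiv.Perm X) (a • x)
      = (MulAut.conj u : G ≃* G) a • (MulAction.toPerm u : Equiv.Perm X) x := by
    intro a x
    show u • a • x = (u * a * u⁻¹) • u • x
    rw [smul_smul, smul_smul]
    congr 1
    group
  rw [← he]
  exact chiOrb_congr k _ _ _ _ (centMulEquiv (MulAut.conj u : G ≃* G) g)
    (fixEquiv (MulAut.conj u : G ≃* G) (MulAction.toPerm u) hf g)
    (fixEquiv_equivariant (MulAut.conj u : G ≃* G) (MulAction.toPerm u) hf g)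

section Prod

variable {G₁ G₂ X₁ X₂ : Type} [Group G₁] [Group G₂] [MulAction G₁ X₁] [MulAction G₂ X₂]

lemma isConj_prod {a b : G₁ × G₂} : IsConj a b ↔ IsConj a.1 b.1 ∧ IsConj a.2 b.2 := by
  constructor
  · intro h
    exact ⟨(MonoidHom.fst G₁ G₂).map_isConj h, (MonoidHom.snd G₁ G₂).map_isConj h⟩
  · rintro ⟨h₁, h₂⟩
    obtain ⟨c₁, hc₁⟩ := isConj_iff.mp h₁
    obtain ⟨c₂, hc₂⟩ := isConj_iff.mp h₂
    exact isConj_iff.mpr ⟨(c₁, c₂), Prod.ext hc₁ hc₂⟩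

/-- Conjugacy classes of a product group. -/
noncomputable def conjClassesProdEquiv (G₁ G₂ : Type) [Group G₁] [Group G₂] :
    ConjClasses (G₁ × G₂) ≃ ConjClasses G₁ × ConjClasses G₂ where
  toFun c := (ConjClasses.map (MonoidHom.fst G₁ G₂) c, ConjClasses.map (MonoidHom.snd G₁ G₂) c)
  invFun p := ConjClasses.mk (Quotient.out p.1, Quotient.out p.2)
  left_inv c := by
    obtain ⟨a, rfl⟩ := ConjClasses.mk_surjective c
    show ConjClasses.mk (Quotient.out (ConjClasses.mk a.1), Quotient.out (ConjClasses.mk a.2))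
      = ConjClasses.mk a
    rw [ConjClasses.mk_eq_mk_iff_isConj, isConj_prod]
    exact ⟨ConjClasses.mk_eq_mk_iff_isConj.mp (conjClasses_mk_out (ConjClasses.mk a.1)),
      ConjClasses.mk_eq_mk_iff_isConj.mp (conjClasses_mk_out (ConjClasses.mk a.2))⟩
  right_inv p := by
    refine Prod.ext ?_ ?_
    · show ConjClasses.mk (Quotient.out p.1) = p.1
      exact conjClasses_mk_out p.1
    · show ConjClasses.mk (Quotient.out p.2) = p.2
      exact conjClasses_mk_out p.2

/-- Centralizer of a product element. -/
def centProdEquiv (a₁ : G₁) (a₂ : G₂) :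
    centralizer ({(a₁, a₂)} : Set (G₁ × G₂))
      ≃* centralizer ({a₁} : Set G₁) × centralizer ({a₂} : Set G₂) where
  toFun w := (⟨w.1.1, by
      rw [Subgroup.mem_centralizer_singleton_iff]
      have := Subgroup.mem_centralizer_singleton_iff.mp w.2
      exact congrArg Prod.fst this⟩,
    ⟨w.1.2, by
      rw [Subgroup.mem_centralizer_singleton_iff]
      have := Subgroup.mem_centralizer_singleton_iff.mp w.2
      exact congrArg Prod.snd this⟩)
  invFun p := ⟨(p.1.1, p.2.1), by
    rw [Subgroup.mem_centralizer_singleton_iff]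
    have h1 := Subgroup.mem_centralizer_singleton_iff.mp p.1.2
    have h2 := Subgroup.mem_centralizer_singleton_iff.mp p.2.2
    exact Prod.ext h1 h2⟩
  left_inv w := Subtype.ext rfl
  right_inv p := Prod.ext (Subtype.ext rfl) (Subtype.ext rfl)
  map_mul' u v := Prod.ext (Subtype.ext rfl) (Subtype.ext rfl)

/-- Fixed points of a product element. -/
def fixProdEquiv (a₁ : G₁) (a₂ : G₂) :
    fixedBy (X₁ × X₂) (a₁, a₂) ≃ fixedBy X₁ a₁ × fixedBy X₂ a₂ where
  toFun x := (⟨x.1.1, congrArg Prod.fst x.2⟩, ⟨x.1.2, congrArg Prod.snd x.2⟩)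
  invFun p := ⟨(p.1.1, p.2.1), Prod.ext p.1.2 p.2.2⟩
  left_inv x := Subtype.ext rfl
  right_inv p := Prod.ext (Subtype.ext rfl) (Subtype.ext rfl)

lemma fixProdEquiv_equivariant (a₁ : G₁) (a₂ : G₂)
    (u : centralizer ({(a₁, a₂)} : Set (G₁ × G₂))) (x : fixedBy (X₁ × X₂) (a₁, a₂)) :
    (fixProdEquiv a₁ a₂ (u • x) : fixedBy X₁ a₁ × fixedBy X₂ a₂)
      = centProdEquiv a₁ a₂ u • fixProdEquiv a₁ a₂ x :=
  Prod.ext (Subtype.ext rfl) (Subtype.ext rfl)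

end Prod

/-- The order-`k` Euler characteristic is multiplicative for every `k ≥ 0`. -/
theorem chiOrb_mul (k : ℕ) (X₁ G₁ X₂ G₂ : Type) [Group G₁] [Group G₂]
    [MulAction G₁ X₁] [MulAction G₂ X₂] [Finite G₁] [Finite G₂] [Finite X₁] [Finite X₂] :
    chiOrb k (X₁ × X₂) (G₁ × G₂) = chiOrb k X₁ G₁ * chiOrb k X₂ G₂ := by
  induction k generalizing X₁ G₁ X₂ G₂ with
  | zero =>
    show Nat.card (orbitRel.Quotient (G₁ × G₂) (X₁ × X₂))
      = Nat.card (orbitRel.Quotient G₁ X₁) * Nat.card (orbitRel.Quotient G₂ X₂)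
    rw [← Nat.card_prod]
    refine Nat.card_congr ?_
    refine ⟨Quotient.lift (fun x : X₁ × X₂ =>
        ((Quotient.mk (orbitRel G₁ X₁) x.1 : orbitRel.Quotient G₁ X₁),
         (Quotient.mk (orbitRel G₂ X₂) x.2 : orbitRel.Quotient G₂ X₂))) ?_,
      fun p => Quotient.liftOn₂ p.1 p.2
        (fun x y => (Quotient.mk (orbitRel (G₁ × G₂) (X₁ × X₂)) (x, y)
          : orbitRel.Quotient (G₁ × G₂) (X₁ × X₂))) ?_, ?_, ?_⟩
    · rintro a b hab
      obtain ⟨g, hg⟩ := hab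
      refine Prod.ext ?_ ?_ <;> dsimp only
      · exact Quotient.sound ⟨g.1, congrArg Prod.fst hg⟩
      · exact Quotient.sound ⟨g.2, congrArg Prod.snd hg⟩
    · rintro a₁ a₂ b₁ b₂ ⟨g₁, hg₁⟩ ⟨g₂, hg₂⟩
      exact Quotient.sound ⟨(g₁, g₂), Prod.ext hg₁ hg₂⟩
    · intro q
      induction q using Quotient.inductionOn with
      | h x => rfl
    · rintro ⟨q₁, q₂⟩
      induction q₁ using Quotient.inductionOn with
      | h x =>
        induction q₂ using Quotient.inductionOn with
        | h y => rfl
  | succ k ih =>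
    have : Finite (ConjClasses G₁) := Quotient.finite _
    have : Finite (ConjClasses G₂) := Quotient.finite _
    have : Finite (ConjClasses (G₁ × G₂)) := Quotient.finite _
    have f1 : Fintype (ConjClasses G₁) := Fintype.ofFinite _
    have f2 : Fintype (ConjClasses G₂) := Fintype.ofFinite _
    have f3 : Fintype (ConjClasses (G₁ × G₂)) := Fintype.ofFinite _
    show (∑ᶠ c : ConjClasses (G₁ × G₂), chiOrb k (fixedBy (X₁ × X₂) (Quotient.out c))
        (centralizer ({Quotient.out c} : Set (G₁ × G₂))))
      = (∑ᶠ c : ConjClasses G₁, chiOrb k (fixedBy X₁ (Quotient.out c))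
          (centralizer ({Quotient.out c} : Set G₁)))
        * ∑ᶠ c : ConjClasses G₂, chiOrb k (fixedBy X₂ (Quotient.out c))
          (centralizer ({Quotient.out c} : Set G₂))
    have key : ∀ c : ConjClasses (G₁ × G₂),
        chiOrb k (fixedBy (X₁ × X₂) (Quotient.out c))
          (centralizer ({Quotient.out c} : Set (G₁ × G₂)))
        = (fun p : ConjClasses G₁ × ConjClasses G₂ =>
            chiOrb k (fixedBy X₁ (Quotient.out p.1))
              (centralizer ({Quotient.out p.1} : Set G₁))
            * chiOrb k (fixedBy X₂ (Quotient.out p.2))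
              (centralizer ({Quotient.out p.2} : Set G₂))) (conjClassesProdEquiv G₁ G₂ c) := by
      intro c
      have hEc : conjClassesProdEquiv G₁ G₂ c
          = (ConjClasses.mk (Quotient.out c).1, ConjClasses.mk (Quotient.out c).2) := by
        conv_lhs => rw [← conjClasses_mk_out c]
        rfl
      have hc1 : IsConj (Quotient.out c).1 (Quotient.out (conjClassesProdEquiv G₁ G₂ c).1) :=
        ConjClasses.mk_eq_mk_iff_isConj.mp (by rw [conjClasses_mk_out, hEc])
      have hc2 : IsConj (Quotient.out c).2 (Quotient.out (conjClassesProdEquiv G₁ G₂ c).2) :=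
        ConjClasses.mk_eq_mk_iff_isConj.mp (by rw [conjClasses_mk_out, hEc])
      have hconj : IsConj (Quotient.out c)
          ((Quotient.out (conjClassesProdEquiv G₁ G₂ c).1,
            Quotient.out (conjClassesProdEquiv G₁ G₂ c).2) : G₁ × G₂) :=
        isConj_prod.mpr ⟨hc1, hc2⟩
      rw [chiOrb_fix_conj k (X₁ × X₂) (G₁ × G₂) _ _ hconj]
      rw [chiOrb_congr k _ _ _ _
        (centProdEquiv (Quotient.out (conjClassesProdEquiv G₁ G₂ c).1)
          (Quotient.out (conjClassesProdEquiv G₁ G₂ c).2))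
        (fixProdEquiv (Quotient.out (conjClassesProdEquiv G₁ G₂ c).1)
          (Quotient.out (conjClassesProdEquiv G₁ G₂ c).2))
        (fixProdEquiv_equivariant _ _)]
      exact ih _ _ _ _
    rw [finsum_eq_of_bijective (g := fun p : ConjClasses G₁ × ConjClasses G₂ =>
        chiOrb k (fixedBy X₁ (Quotient.out p.1)) (centralizer ({Quotient.out p.1} : Set G₁))
          * chiOrb k (fixedBy X₂ (Quotient.out p.2)) (centralizer ({Quotient.out p.2} : Set G₂)))
      (conjClassesProdEquiv G₁ G₂) (conjClassesProdEquiv G₁ G₂).bijective key]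
    rw [finsum_eq_sum_of_fintype, finsum_eq_sum_of_fintype, finsum_eq_sum_of_fintype,
      Fintype.sum_mul_sum, Fintype.sum_prod_type]
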